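/- For ground variadic nominal terms, if t ≈ t' and a # t holds, then a # t' holds (α-equivalence preserves freshness). -/

import Mathlib

abbrev Atom := ℕ

def swapAtom (a b c : Atom) : Atom :=
  if c = a then b else if c = b then a else c

/- Ground variadic nominal terms: t ::= a | a.t | f(s̃). -/
inductive GTm where
  | atom (a : Atom)
  | abs (a : Atom) (t : GTm)
  | app (f : ℕ) (args : List GTm)

/- The swapping action on ground terms. -/
def swapG (a b : Atom) : GTm → GTm
  | .atom c => .atom (swapAtom a b c)
  | .abs c t => .abs (swapAtom a b c) (swapG a b t)
  | .app f args => .app f (args.attach.map (fun r => swapG a b r.1))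
  decreasing_by all_goals first | (simp_wf; omega) | (simp_wf; obtain ⟨v, hv⟩ := r; have := List.sizeOf_lt_of_mem hv; simp_all; omega) | simp_wf

/- The freshness relation a # t on ground terms. -/
inductive GFresh : Atom → GTm → Prop
  | atom {a b : Atom} : a ≠ b → GFresh a (.atom b)
  | abs1 {a : Atom} {t : GTm} : GFresh a (.abs a t)
  | abs2 {a b : Atom} {t : GTm} : a ≠ b → GFresh a t → GFresh a (.abs b t)
  | app {a : Atom} {f : ℕ} {args : List GTm} :
      (∀ r ∈ args, GFresh a r) → GFresh a (.app f args)

/- α-equivalence on ground terms. -/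
inductive Aeq : GTm → GTm → Prop
  | atom {a : Atom} : Aeq (.atom a) (.atom a)
  | app {f : ℕ} {args args' : List GTm} :
      List.Forall₂ Aeq args args' → Aeq (.app f args) (.app f args')
  | abs1 {a : Atom} {t t' : GTm} : Aeq t t' → Aeq (.abs a t) (.abs a t')
  | abs2 {a b : Atom} {t t' : GTm} : a ≠ b → Aeq t (swapG a b t') →
      GFresh a (.abs b t') → Aeq (.abs a t) (.abs b t')


lemma swapAtom_invol (a b c : Atom) : swapAtom a b (swapAtom a b c) = c := by
  unfold swapAtom; split_ifs <;> simp_all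

lemma swapAtom_ne (a b : Atom) {c d : Atom} (h : c ≠ d) :
    swapAtom a b c ≠ swapAtom a b d := by
  unfold swapAtom; split_ifs <;> simp_all <;> tauto

lemma swapAtom_eq_of_ne {a x y : Atom} (h1 : a ≠ x) (h2 : a ≠ y) :
    swapAtom x y a = a := by
  unfold swapAtom; split_ifs <;> simp_all

lemma swapG_invol (a b : Atom) (t : GTm) : swapG a b (swapG a b t) = t := by
  induction t using GTm.rec (motive_2 := fun l => ∀ r ∈ l, swapG a b (swapG a b r) = r) with
  | atom c => simp [swapG, swapAtom_invol]
  | abs c t ih => simp [swapG, swapAtom_invol, ih]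
  | app f args ih =>
      simp only [swapG, List.map_attach_eq_pmap, List.pmap_eq_map, List.map_map, Function.comp_def]
      rw [show args.map (fun x => swapG a b (swapG a b x)) = args.map id from
        List.map_congr_left ih, List.map_id]
  | nil => rename_i r hr; simp at hr
  | cons h t ih1 ih2 =>
      rename_i r hr
      rcases List.mem_cons.mp hr with rfl | hr
      · exact ih1
      · exact ih2 r hr

lemma fresh_equiv {c : Atom} {t : GTm} (a b : Atom) (h : GFresh c t) :
    GFresh (swapAtom a b c) (swapG a b t) := by
  induction h with
  | atom hne => simp only [swapG]; exact GFresh.atom (swapAtom_ne a b hne)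
  | abs1 => simp only [swapG]; exact GFresh.abs1
  | abs2 hne _ ih => simp only [swapG]; exact GFresh.abs2 (swapAtom_ne a b hne) ih
  | app _ ih =>
      simp only [swapG, List.map_attach_eq_pmap, List.pmap_eq_map]
      refine GFresh.app ?_
      intro r hr
      obtain ⟨s, hs, rfl⟩ := List.mem_map.mp hr
      exact ih s hs

/-- α-equivalence preserves freshness on ground terms. -/
theorem aeq_preserves_fresh {a : Atom} {t t' : GTm}
    (h : Aeq t t') (hf : GFresh a t) : GFresh a t' := by
  induction h using Aeq.rec
    (motive_2 := fun l l' _ => (∀ r ∈ l, GFresh a r) → ∀ r ∈ l', GFresh a r) with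
  | atom => exact hf
  | app _ ih =>
      cases hf with
      | app hall => exact GFresh.app (ih hall)
  | abs1 _ ih =>
      cases hf with
      | abs1 => exact GFresh.abs1
      | abs2 hne hft => exact GFresh.abs2 hne (ih hft)
  | @abs2 a' b t0 t0' hne _ hfabs ih =>
      cases hf with
      | abs1 => exact hfabs
      | abs2 hne2 hft =>
          have h2 := ih hft
          by_cases hab : a = b
          · subst hab; exact GFresh.abs1
          · have h3 := fresh_equiv (c := a) a' b h2
            rw [swapG_invol, swapAtom_eq_of_ne hne2 hab] at h3
            exact GFresh.abs2 hab h3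
  | nil => rename_i r hr; simp at hr
  | cons h1 _ ih1 ih2 =>
      rename_i hall r hr
      rcases List.mem_cons.mp hr with rfl | hr
      · exact ih1 (hall _ List.mem_cons_self)
      · exact ih2 (fun s hs => hall s (List.mem_cons_of_mem _ hs)) r hr
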